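/- arXiv:1202.4240 — 5 statements merged into one kernel-verified Lean document; each statement's English description precedes it below -/
import Mathlib

section
/- For positive integers n and q and a non-negative integer k, the limit as z tends to -k of Γ(n z) / Γ(q z) equals (-1)^((n - q) * k) * (q / n) * (q k)! / (n k)!. -/
open Finset Nat

/-- product lemma -/
lemma prod_sub_cast (m : ℕ) : ∏ j ∈ range m, ((j : ℂ) - m) = (-1) ^ m * (m ! : ℂ) := by
  have h1 : ∏ j ∈ range m, ((j : ℂ) - m) = ∏ j ∈ range m, (-1) * ((m : ℂ) - j) := by
    apply Finset.prod_congr rfl; intro j _; ring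
  rw [h1, Finset.prod_mul_distrib, Finset.prod_const]
  congr 1
  · simp
  rw [← Finset.prod_range_reflect]
  calc ∏ j ∈ range m, ((m : ℂ) - (m - 1 - j : ℕ))
      = ∏ j ∈ range m, ((j : ℂ) + 1) := by
        apply Finset.prod_congr rfl
        intro j hj
        simp only [Finset.mem_range] at hj
        rw [Nat.cast_sub (by omega), Nat.cast_sub (by omega)]
        push_cast
        ring
    _ = ((∏ j ∈ range m, (j + 1) : ℕ) : ℂ) := by push_cast; rfl
    _ = (m ! : ℂ) := by rw [Finset.prod_range_add_one_eq_factorial]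

lemma Gamma_add_nat (z : ℂ) (m : ℕ) (h : ∀ j < m, z + j ≠ 0) :
    Complex.Gamma (z + m) = Complex.Gamma z * ∏ j ∈ range m, (z + j) := by
  induction m with
  | zero => simp
  | succ m ih =>
    have hm : z + m ≠ 0 := h m (by omega)
    have : z + (m + 1 : ℕ) = (z + m) + 1 := by push_cast; ring
    rw [this, Complex.Gamma_add_one _ hm, ih (fun j hj => h j (by omega)),
      Finset.prod_range_succ]
    ring

lemma step_ne (c : ℕ) (hc : 0 < c) (k : ℕ) (z : ℂ) (hz : z ≠ -(k : ℂ))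
    (hb : ‖z + k‖ < 1 / c) : ∀ m : ℕ, (c : ℂ) * z + m ≠ 0 := by
  intro m h0
  have hck : (c : ℂ) * (z + k) = ((c * k : ℤ) - m : ℤ) := by
    push_cast
    linear_combination h0
  have hm : (c * k : ℤ) - m ≠ 0 := by
    intro hd
    rw [hd] at hck
    simp only [Int.cast_zero] at hck
    have : z + k = 0 := by
      rcases mul_eq_zero.mp hck with h | h
      · exact absurd h (Nat.cast_ne_zero.mpr hc.ne')
      · exact h
    exact hz (by linear_combination this)
  have h1 : (1 : ℝ) ≤ ‖(((c * k : ℤ) - m : ℤ) : ℂ)‖ := by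
    rw [Complex.norm_intCast]
    exact_mod_cast Int.one_le_abs hm
  rw [← hck, norm_mul] at h1
  rw [show ‖(c : ℂ)‖ = (c : ℝ) by simp] at h1
  have hc1 : (0 : ℝ) < c := Nat.cast_pos.mpr hc
  have : (c : ℝ) * ‖z + k‖ < c * (1 / c) := by
    exact mul_lt_mul_of_pos_left hb hc1
  rw [mul_one_div_cancel hc1.ne'] at this
  linarith

lemma one_ne_neg_nat : ∀ m : ℕ, (1 : ℂ) ≠ -m := by
  intro m h
  have h2 := congrArg Complex.re h
  simp only [Complex.one_re, Complex.neg_re, Complex.natCast_re] at h2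
  have : (0:ℝ) ≤ (m:ℝ) := Nat.cast_nonneg m
  linarith

lemma contGamma (c : ℕ) (k : ℕ) : ContinuousAt
    (fun z : ℂ => Complex.Gamma ((c : ℂ) * z + ((c * k + 1 : ℕ) : ℂ))) (-(k : ℂ)) := by
  have h1 : (c : ℂ) * (-(k : ℂ)) + ((c * k + 1 : ℕ) : ℂ) = 1 := by
    push_cast; ring
  have hΓ : ContinuousAt Complex.Gamma ((c : ℂ) * (-(k : ℂ)) + ((c * k + 1 : ℕ) : ℂ)) := by
    rw [h1]
    exact (Complex.differentiableAt_Gamma 1 one_ne_neg_nat).continuousAt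
  exact ContinuousAt.comp hΓ ((continuous_const.mul continuous_id).add continuous_const).continuousAt

theorem gamma_ratio_limit (n q : ℕ) (hn : 0 < n) (hq : 0 < q) (k : ℕ) :
    Filter.Tendsto (fun z : ℂ => Complex.Gamma (n * z) / Complex.Gamma (q * z))
      (nhdsWithin (-(k : ℂ)) {(-(k : ℂ))}ᶜ)
      (nhds ((-1 : ℂ) ^ (((n : ℤ) - q) * k) * ((q : ℂ) / n) *
        (Nat.factorial (q * k) : ℂ) / (Nat.factorial (n * k) : ℂ))) := by
  have hn' : (n : ℂ) ≠ 0 := Nat.cast_ne_zero.mpr hn.ne'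
  have hq' : (q : ℂ) ≠ 0 := Nat.cast_ne_zero.mpr hq.ne'
  set g : ℂ → ℂ := fun z =>
    Complex.Gamma ((n : ℂ) * z + ((n * k + 1 : ℕ) : ℂ)) *
      ((q : ℂ) * ∏ j ∈ range (q * k), ((q : ℂ) * z + j)) /
    (Complex.Gamma ((q : ℂ) * z + ((q * k + 1 : ℕ) : ℂ)) *
      ((n : ℂ) * ∏ j ∈ range (n * k), ((n : ℂ) * z + j))) with hg_def
  -- value of products at -k
  have hprod : ∀ c : ℕ, ∏ j ∈ range (c * k), ((c : ℂ) * (-(k : ℂ)) + j)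
      = (-1) ^ (c * k) * ((c * k)! : ℂ) := by
    intro c
    rw [← prod_sub_cast (c * k)]
    apply Finset.prod_congr rfl
    intro j _
    push_cast
    ring
  have hgamma1 : ∀ c : ℕ, (c : ℂ) * (-(k : ℂ)) + ((c * k + 1 : ℕ) : ℂ) = 1 := by
    intro c; push_cast; ring
  have hfacn : ((n * k)! : ℂ) ≠ 0 := Nat.cast_ne_zero.mpr (Nat.factorial_ne_zero _)
  have hfacq : ((q * k)! : ℂ) ≠ 0 := Nat.cast_ne_zero.mpr (Nat.factorial_ne_zero _)
  have hneg : ∀ m : ℕ, ((-1 : ℂ) ^ m) ≠ 0 := fun m => pow_ne_zero m (by norm_num)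
  -- value of g at -k
  have hgval : g (-(k : ℂ)) = (-1 : ℂ) ^ (((n : ℤ) - q) * k) * ((q : ℂ) / n) *
      ((q * k)! : ℂ) / ((n * k)! : ℂ) := by
    rw [hg_def]
    simp only
    rw [hgamma1 n, hgamma1 q, Complex.Gamma_one, hprod n, hprod q]
    have hzp : (-1 : ℂ) ^ (((n : ℤ) - q) * k) = (-1) ^ (n * k) * (-1) ^ (q * k) := by
      have h5 : ((n : ℤ) - q) * k = (n * k : ℕ) - (q * k : ℕ) := by push_cast; ring
      rw [h5, zpow_sub₀ (by norm_num : (-1 : ℂ) ≠ 0), zpow_natCast, zpow_natCast,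
        div_eq_mul_inv, ← inv_pow, inv_neg, inv_one]
    rw [hzp]
    rcases Nat.even_or_odd (n * k) with h1 | h1 <;> rcases Nat.even_or_odd (q * k) with h2 | h2 <;>
      simp only [h1.neg_one_pow, h2.neg_one_pow] <;> field_simp <;> ring
  -- continuity of g at -k
  have hcont : ContinuousAt g (-(k : ℂ)) := by
    apply ContinuousAt.div
    · exact (contGamma n k).mul (continuousAt_const.mul
        ((continuous_finset_prod _ (fun j _ => (continuous_const.mul continuous_id).add
          continuous_const)).continuousAt))
    · exact (contGamma q k).mul (continuousAt_const.mul
        ((continuous_finset_prod _ (fun j _ => (continuous_const.mul continuous_id).add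
          continuous_const)).continuousAt))
    · rw [hgamma1 q, Complex.Gamma_one, hprod n]
      simp only [one_mul]
      exact mul_ne_zero hn' (mul_ne_zero (hneg _) hfacn)
  have hgtend : Filter.Tendsto g (nhdsWithin (-(k : ℂ)) {(-(k : ℂ))}ᶜ)
      (nhds ((-1 : ℂ) ^ (((n : ℤ) - q) * k) * ((q : ℂ) / n) *
        ((q * k)! : ℂ) / ((n * k)! : ℂ))) := by
    rw [← hgval]
    exact hcont.continuousWithinAt.tendsto
  -- eventual equality
  have hε : (0 : ℝ) < min (1 / (n : ℝ)) (1 / (q : ℝ)) := by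
    apply lt_min <;> positivity
  have hev : (fun z : ℂ => Complex.Gamma (n * z) / Complex.Gamma (q * z))
      =ᶠ[nhdsWithin (-(k : ℂ)) {(-(k : ℂ))}ᶜ] g := by
    filter_upwards [self_mem_nhdsWithin,
      nhdsWithin_le_nhds (Metric.ball_mem_nhds (-(k : ℂ)) hε)] with z hz hball
    have hz' : z ≠ -(k : ℂ) := hz
    rw [Metric.mem_ball, Complex.dist_eq] at hball
    have hzk : z - (-(k:ℂ)) = z + k := by ring
    rw [hzk] at hball
    have hbn : ‖z + (k : ℂ)‖ < 1 / (n : ℝ) := lt_of_lt_of_le hball (min_le_left _ _)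
    have hbq : ‖z + (k : ℂ)‖ < 1 / (q : ℝ) := lt_of_lt_of_le hball (min_le_right _ _)
    have hstepn := step_ne n hn k z hz' hbn
    have hstepq := step_ne q hq k z hz' hbq
    have hA := Gamma_add_nat ((n : ℂ) * z) (n * k + 1) (fun j _ => hstepn j)
    have hB := Gamma_add_nat ((q : ℂ) * z) (q * k + 1) (fun j _ => hstepq j)
    have hΓq : Complex.Gamma ((q : ℂ) * z) ≠ 0 :=
      Complex.Gamma_ne_zero (fun m hm => hstepq m (by rw [hm]; ring))
    have hPn : ∏ j ∈ range (n * k), ((n : ℂ) * z + j) ≠ 0 :=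
      Finset.prod_ne_zero_iff.mpr (fun j _ => hstepn j)
    have hQq : ∏ j ∈ range (q * k), ((q : ℂ) * z + j) ≠ 0 :=
      Finset.prod_ne_zero_iff.mpr (fun j _ => hstepq j)
    have hzk0 : z + (k : ℂ) ≠ 0 := fun h => hz' (by linear_combination h)
    rw [hg_def]
    simp only
    rw [hA, hB, Finset.prod_range_succ, Finset.prod_range_succ]
    have hee1 : (n : ℂ) * z + ((n * k : ℕ) : ℂ) = (n : ℂ) * (z + k) := by push_cast; ring
    have hee2 : (q : ℂ) * z + ((q * k : ℕ) : ℂ) = (q : ℂ) * (z + k) := by push_cast; ring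
    rw [hee1, hee2]
    rw [div_eq_div_iff hΓq (mul_ne_zero (mul_ne_zero hΓq (mul_ne_zero hQq
      (mul_ne_zero hq' hzk0))) (mul_ne_zero hn' hPn))]
    ring
  exact Filter.Tendsto.congr' hev.symm hgtend
end

section
/- For positive integers n and q and non-negative integers i and k, the limit as z tends to -k of ψ^(i)(n z) / ψ^(i)(q z) equals (q / n)^(i+1), where ψ^(i) denotes the i-th derivative of the digamma function. -/
open Complex Filter Metric Set

noncomputable def psiC : ℂ → ℂ := fun w => deriv Complex.Gamma w / Complex.Gamma w

lemma nat_cast_dist (a b : ℕ) (h : a ≠ b) : (1:ℝ) ≤ ‖(a:ℂ) - b‖ := by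
  have e : ((a:ℂ) - b) = (((a:ℤ) - (b:ℤ) : ℤ) : ℂ) := by push_cast; ring
  rw [e, Complex.norm_intCast]
  have h1 : (1:ℤ) ≤ |(a:ℤ) - (b:ℤ)| :=
    Int.one_le_abs (sub_ne_zero.mpr (fun hh => h (by exact_mod_cast hh)))
  exact_mod_cast h1

lemma ball_avoids' {m : ℕ} {w : ℂ} (h1 : ‖w + m‖ < 1) {j : ℕ} (hjm : j ≠ m) :
    w ≠ -(j:ℂ) := by
  intro hj
  have h2 : (1:ℝ) ≤ ‖(m:ℂ) - j‖ := nat_cast_dist m j (Ne.symm hjm)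
  have h3 : (-(j:ℂ)) + m = (m:ℂ) - j := by ring
  rw [hj, h3] at h1
  linarith

lemma ball_avoids {m : ℕ} {w : ℂ} (h1 : ‖w + m‖ < 1) (h2 : w ≠ -(m:ℂ)) :
    ∀ j : ℕ, w ≠ -j := by
  intro j
  rcases eq_or_ne j m with rfl | hjm
  · exact h2
  · exact ball_avoids' h1 hjm

lemma psiC_add_one {w : ℂ} (hw : ∀ j : ℕ, w ≠ -j) :
    psiC (w + 1) = psiC w + w⁻¹ := by
  have h0 : w ≠ 0 := by simpa using hw 0
  have hΓw : DifferentiableAt ℂ Complex.Gamma w := Complex.differentiableAt_Gamma w hw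
  have hΓne : Complex.Gamma w ≠ 0 := Complex.Gamma_ne_zero hw
  have hev : (fun z : ℂ => Complex.Gamma (z + 1)) =ᶠ[nhds w] (fun z => z * Complex.Gamma z) := by
    filter_upwards [eventually_ne_nhds h0] with z hz
    exact Complex.Gamma_add_one z hz
  have hderiv : deriv Complex.Gamma (w + 1) = Complex.Gamma w + w * deriv Complex.Gamma w := by
    have h1 : deriv (fun z : ℂ => Complex.Gamma (z + 1)) w = deriv Complex.Gamma (w + 1) :=
      deriv_comp_add_const Complex.Gamma 1 w
    have h2 : deriv (fun z : ℂ => z * Complex.Gamma z) w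
        = Complex.Gamma w + w * deriv Complex.Gamma w := by
      rw [deriv_fun_mul differentiableAt_fun_id hΓw]; simp
    rw [← h1, hev.deriv_eq, h2]
  rw [psiC, psiC, hderiv, Complex.Gamma_add_one w h0]
  field_simp
  ring

lemma psiC_add_nat {w : ℂ} (hw : ∀ j : ℕ, w ≠ -j) (m : ℕ) :
    psiC (w + m) = psiC w + ∑ j ∈ Finset.range m, (w + j)⁻¹ := by
  induction m with
  | zero => simp
  | succ m ih =>
    have hwm : ∀ j : ℕ, w + m ≠ -j := by
      intro j hj
      exact hw (j + m) (by push_cast; linear_combination hj)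
    have e : w + ((m:ℕ)+1 : ℕ) = (w + m) + 1 := by push_cast; ring
    rw [e, psiC_add_one hwm, ih, Finset.sum_range_succ]
    ring

lemma analyticOnNhd_iteratedDeriv {U : Set ℂ} (hU : IsOpen U) {f : ℂ → ℂ}
    (hf : AnalyticOnNhd ℂ f U) (i : ℕ) : AnalyticOnNhd ℂ (iteratedDeriv i f) U := by
  induction i generalizing f with
  | zero => simpa [iteratedDeriv_zero] using hf
  | succ i ih =>
    rw [iteratedDeriv_succ']
    exact ih (hf.deriv_of_isOpen hU)

lemma iteratedDeriv_add_of_analytic {U : Set ℂ} (hU : IsOpen U) {f g : ℂ → ℂ}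
    (hf : AnalyticOnNhd ℂ f U) (hg : AnalyticOnNhd ℂ g U) (i : ℕ) :
    ∀ x ∈ U, iteratedDeriv i (fun w => f w + g w) x
      = iteratedDeriv i f x + iteratedDeriv i g x := by
  induction i generalizing f g with
  | zero => intro x _; simp
  | succ i ih =>
    intro x hx
    rw [iteratedDeriv_succ', iteratedDeriv_succ', iteratedDeriv_succ']
    have heq : Set.EqOn (deriv (fun w => f w + g w))
        (fun w => deriv f w + deriv g w) U := fun y hy =>
      deriv_add (hf y hy).differentiableAt (hg y hy).differentiableAt
    rw [heq.iteratedDeriv_of_isOpen hU i hx]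
    exact ih (hf.deriv_of_isOpen hU) (hg.deriv_of_isOpen hU) x hx

lemma psiC_iteratedDeriv_near (i m : ℕ) :
    ∃ h : ℂ → ℂ, ContinuousAt h (-(m:ℂ)) ∧ ∀ w : ℂ, ‖w + m‖ < 1 → w ≠ -(m:ℂ) →
      iteratedDeriv i psiC w
        = (-(∏ j ∈ Finset.range i, (-1 - j : ℂ))) * (w + m) ^ (-1 - i : ℤ) + h w := by
  set g : ℂ → ℂ := fun w => psiC (w + (m:ℂ) + 1) - ∑ j ∈ Finset.range m, (w + j)⁻¹ with hg_def
  set B : Set ℂ := Metric.ball (-(m:ℂ)) 1 with hB_def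
  have hnormB : ∀ {w : ℂ}, w ∈ B ↔ ‖w + m‖ < 1 := by
    intro w
    simp [hB_def, Metric.mem_ball, dist_eq_norm, sub_neg_eq_add]
  have hball1 : ∀ s ∈ Metric.ball (1:ℂ) 1, ∀ j : ℕ, s ≠ -j := by
    intro s hs j hj
    have hd : ‖s - 1‖ < 1 := by simpa [Metric.mem_ball, dist_eq_norm] using hs
    rw [hj] at hd
    have h2 : (1:ℝ) ≤ ‖((j+1 : ℕ):ℂ) - (0 : ℕ)‖ := nat_cast_dist (j+1) 0 (Nat.succ_ne_zero j)
    have e : (-(j:ℂ)) - 1 = -(((j+1 : ℕ):ℂ) - (0 : ℕ)) := by push_cast; ring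
    rw [e, norm_neg] at hd
    linarith
  have hΓan : AnalyticOnNhd ℂ Complex.Gamma (Metric.ball (1:ℂ) 1) := by
    apply DifferentiableOn.analyticOnNhd _ Metric.isOpen_ball
    exact fun s hs =>
      (Complex.differentiableAt_Gamma s (hball1 s hs)).differentiableWithinAt
  have hψan : ∀ s ∈ Metric.ball (1:ℂ) 1, AnalyticAt ℂ psiC s := fun s hs =>
    ((hΓan.deriv_of_isOpen Metric.isOpen_ball) s hs).div (hΓan s hs)
      (Complex.Gamma_ne_zero (hball1 s hs))
  have hgan : AnalyticOnNhd ℂ g B := by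
    intro w hw
    have hwn : ‖w + m‖ < 1 := hnormB.mp hw
    have hw1 : w + (m:ℂ) + 1 ∈ Metric.ball (1:ℂ) 1 := by
      have e : w + (m:ℂ) + 1 - 1 = w + m := by ring
      simpa [Metric.mem_ball, dist_eq_norm, e] using hwn
    have haff : AnalyticAt ℂ (fun w : ℂ => w + (m:ℂ) + 1) w :=
      ((analyticAt_id).add analyticAt_const).add analyticAt_const
    have h1 : AnalyticAt ℂ (fun w : ℂ => psiC (w + (m:ℂ) + 1)) w :=
      AnalyticAt.comp (g := psiC) (f := fun w : ℂ => w + (m:ℂ) + 1) (hψan _ hw1) haff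
    have h2 : AnalyticAt ℂ (fun w : ℂ => ∑ j ∈ Finset.range m, (w + j)⁻¹) w := by
      apply Finset.analyticAt_fun_sum
      intro j hj
      apply ((analyticAt_id).add analyticAt_const).inv
      simp only [Finset.mem_range] at hj
      intro h0
      have h0' : w + (j:ℂ) = 0 := by simpa using h0
      exact ball_avoids' hwn (Nat.ne_of_lt hj) (by linear_combination h0')
    exact h1.sub h2
  set V : Set ℂ := B \ {-(m:ℂ)} with hV_def
  have hVopen : IsOpen V := Metric.isOpen_ball.sdiff isClosed_singleton
  have hpan : AnalyticOnNhd ℂ (fun w : ℂ => -((w + (m:ℂ))⁻¹)) V := by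
    intro w hw
    refine (((analyticAt_id).add analyticAt_const).inv ?_).neg
    intro h0
    have h0' : w + (m:ℂ) = 0 := by simpa using h0
    exact hw.2 (by simp only [Set.mem_singleton_iff]; linear_combination h0')
  have heq : Set.EqOn psiC (fun w => -((w + (m:ℂ))⁻¹) + g w) V := by
    intro w hw
    have hwne : w ≠ -(m:ℂ) := by
      intro hh; exact hw.2 (by simp [hh])
    have hwa : ∀ j : ℕ, w ≠ -j := ball_avoids (hnormB.mp hw.1) hwne
    have H := psiC_add_nat hwa (m + 1)
    rw [Finset.sum_range_succ] at H
    have e : w + ((m + 1 : ℕ):ℂ) = w + (m:ℂ) + 1 := by push_cast; ring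
    rw [e] at H
    simp only [hg_def]
    linear_combination -H
  refine ⟨iteratedDeriv i g, ?_, ?_⟩
  · have hmB : -(m:ℂ) ∈ B := by
      simp [hB_def, Metric.mem_ball]
    exact ((analyticOnNhd_iteratedDeriv Metric.isOpen_ball hgan i) _ hmB).continuousAt
  · intro w hwn hwne
    have hwV : w ∈ V := ⟨hnormB.mpr hwn, by simpa using hwne⟩
    rw [heq.iteratedDeriv_of_isOpen hVopen i hwV,
      iteratedDeriv_add_of_analytic hVopen hpan
        (hgan.mono Set.diff_subset) i w hwV]
    congr 1
    have h1 : iteratedDeriv i (fun w : ℂ => -((w + (m:ℂ))⁻¹)) w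
        = iteratedDeriv i (fun y : ℂ => -(y⁻¹)) (w + m) :=
      congrFun (iteratedDeriv_comp_add_const i (fun y : ℂ => -(y⁻¹)) (m:ℂ)) w
    have h2 : iteratedDeriv i (fun y : ℂ => -(y⁻¹)) (w + m)
        = -iteratedDeriv i (fun y : ℂ => y⁻¹) (w + m) := iteratedDeriv_neg i _ _
    have h3 : iteratedDeriv i (fun y : ℂ => y⁻¹) (w + m)
        = (∏ j ∈ Finset.range i, (-1 - j : ℂ)) * (w + m) ^ (-1 - i : ℤ) := by
      have e : iteratedDeriv i (fun y : ℂ => y⁻¹) = deriv^[i] (fun y : ℂ => y⁻¹) :=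
        iteratedDeriv_eq_iterate
      rw [e]
      have hp : ∀ n : ℕ, (∏ j ∈ Finset.range n, (-1 - j : ℂ)) = (-1) ^ n * (n.factorial : ℂ) := by
        intro n
        induction n with
        | zero => simp
        | succ n ihn =>
          rw [Finset.prod_range_succ, ihn, pow_succ, Nat.factorial_succ]; push_cast; ring
      rw [hp]
      exact iter_deriv_inv i (w + m)
    rw [h1, h2, h3, neg_mul]

theorem polygamma_ratio_limit (n q : ℕ) (hn : 0 < n) (hq : 0 < q) (i k : ℕ) :
    Filter.Tendsto
      (fun z : ℂ =>
        iteratedDeriv i (fun w : ℂ => deriv Complex.Gamma w / Complex.Gamma w) (n * z) /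
        iteratedDeriv i (fun w : ℂ => deriv Complex.Gamma w / Complex.Gamma w) (q * z))
      (nhdsWithin (-(k : ℂ)) {(-(k : ℂ))}ᶜ)
      (nhds (((q : ℂ) / n) ^ (i + 1))) := by
  have hfun : (fun w : ℂ => deriv Complex.Gamma w / Complex.Gamma w) = psiC := rfl
  rw [hfun]
  obtain ⟨h₁, hc₁, hk₁⟩ := psiC_iteratedDeriv_near i (n * k)
  obtain ⟨h₂, hc₂, hk₂⟩ := psiC_iteratedDeriv_near i (q * k)
  set c : ℂ := -(∏ j ∈ Finset.range i, (-1 - j : ℂ)) with hc_def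
  have hcne : c ≠ 0 := by
    rw [hc_def, neg_ne_zero]
    apply Finset.prod_ne_zero_iff.mpr
    intro j _
    have hj1 : ((j:ℂ) + 1) ≠ 0 := by exact_mod_cast Nat.succ_ne_zero j
    intro h0
    exact hj1 (by linear_combination -h0)
  have hn' : (n:ℂ) ≠ 0 := Nat.cast_ne_zero.mpr hn.ne'
  have hq' : (q:ℂ) ≠ 0 := Nat.cast_ne_zero.mpr hq.ne'
  have hzp : ∀ X : ℂ, X ^ (-1 - i : ℤ) = (X ^ (i+1))⁻¹ := by
    intro X
    rw [show (-1 - i : ℤ) = -((i+1 : ℕ) : ℤ) by push_cast; ring, zpow_neg, zpow_natCast]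
  set l := nhdsWithin (-(k : ℂ)) {(-(k : ℂ))}ᶜ with hl_def
  set δ : ℝ := min ((n:ℝ)⁻¹) ((q:ℝ)⁻¹) with hδ_def
  have hnpos : (0:ℝ) < n := by exact_mod_cast hn
  have hqpos : (0:ℝ) < q := by exact_mod_cast hq
  have hδpos : 0 < δ := lt_min (inv_pos.mpr hnpos) (inv_pos.mpr hqpos)
  have hev : ∀ᶠ z in l, z ≠ -(k:ℂ) ∧ ‖z + (k:ℂ)‖ < δ := by
    have h1 : ∀ᶠ z in l, z ≠ -(k:ℂ) := by
      filter_upwards [self_mem_nhdsWithin] with z hz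
      simpa using hz
    have h2 : ∀ᶠ z in l, ‖z + (k:ℂ)‖ < δ := by
      apply Filter.Eventually.filter_mono nhdsWithin_le_nhds
      filter_upwards [Metric.ball_mem_nhds (-(k:ℂ)) hδpos] with z hz
      simpa [Metric.mem_ball, dist_eq_norm, sub_neg_eq_add] using hz
    exact h1.and h2
  have hpt : ∀ (p : ℕ), 0 < p → δ ≤ (p:ℝ)⁻¹ → ∀ z : ℂ, z ≠ -(k:ℂ) → ‖z + k‖ < δ →
      ‖(p:ℂ) * z + ((p * k : ℕ):ℂ)‖ < 1 ∧ (p:ℂ) * z ≠ -((p * k : ℕ):ℂ) := by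
    intro p hp hpδ z hz hznorm
    have hp' : (p:ℂ) ≠ 0 := Nat.cast_ne_zero.mpr hp.ne'
    have hppos : (0:ℝ) < p := by exact_mod_cast hp
    have e : (p:ℂ) * z + ((p * k : ℕ):ℂ) = (p:ℂ) * (z + k) := by push_cast; ring
    constructor
    · rw [e, norm_mul, Complex.norm_natCast]
      calc (p:ℝ) * ‖z + (k:ℂ)‖ < p * δ := by
            exact mul_lt_mul_of_pos_left hznorm hppos
        _ ≤ p * (p:ℝ)⁻¹ := mul_le_mul_of_nonneg_left hpδ (le_of_lt hppos)
        _ = 1 := mul_inv_cancel₀ (ne_of_gt hppos)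
    · intro h0
      apply hz
      have h1 : (p:ℂ) * (z + k) = 0 := by rw [← e, h0]; push_cast; ring
      rcases mul_eq_zero.mp h1 with h | h
      · exact absurd h hp'
      · linear_combination h
  have key : ∀ (p : ℕ), 0 < p → δ ≤ (p:ℝ)⁻¹ → ∀ h : ℂ → ℂ,
      ContinuousAt h (-((p * k : ℕ):ℂ)) →
      (∀ w : ℂ, ‖w + ((p * k : ℕ):ℂ)‖ < 1 → w ≠ -((p * k : ℕ):ℂ) →
        iteratedDeriv i psiC w
          = c * (w + ((p * k : ℕ):ℂ)) ^ (-1 - i : ℤ) + h w) →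
      Tendsto (fun z : ℂ => (z + k) ^ (i + 1) * iteratedDeriv i psiC ((p:ℂ) * z)) l
        (nhds (c * (((p:ℂ)) ^ (i+1))⁻¹)) := by
    intro p hp hpδ h hcont hform
    have hp' : (p:ℂ) ≠ 0 := Nat.cast_ne_zero.mpr hp.ne'
    have htend : Tendsto (fun z : ℂ => c * ((p:ℂ) ^ (i+1))⁻¹
        + (z + k) ^ (i + 1) * h ((p:ℂ) * z)) l
        (nhds (c * ((p:ℂ) ^ (i+1))⁻¹)) := by
      have t1 : Tendsto (fun z : ℂ => (z + (k:ℂ)) ^ (i + 1)) l (nhds 0) := by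
        apply Filter.Tendsto.mono_left _ nhdsWithin_le_nhds
        have hcont1 : ContinuousAt (fun z : ℂ => (z + (k:ℂ)) ^ (i + 1)) (-(k:ℂ)) := by
          fun_prop
        have h0 : (-(k:ℂ) + k) ^ (i + 1) = 0 := by
          rw [neg_add_cancel]; exact zero_pow (Nat.succ_ne_zero i)
        simpa [h0] using hcont1.tendsto
      have t2 : Tendsto (fun z : ℂ => h ((p:ℂ) * z)) l (nhds (h (-((p * k : ℕ):ℂ)))) := by
        apply Filter.Tendsto.mono_left _ nhdsWithin_le_nhds
        apply hcont.tendsto.comp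
        have hcont2 : ContinuousAt (fun z : ℂ => (p:ℂ) * z) (-(k:ℂ)) := by fun_prop
        have e : (p:ℂ) * (-(k:ℂ)) = -((p * k : ℕ):ℂ) := by push_cast; ring
        simpa [e] using hcont2.tendsto
      have := (tendsto_const_nhds (x := c * ((p:ℂ) ^ (i+1))⁻¹) (f := l)).add (t1.mul t2)
      simpa using this
    apply htend.congr'
    filter_upwards [hev] with z hz
    obtain ⟨hz1, hz2⟩ := hz
    obtain ⟨hw1, hw2⟩ := hpt p hp hpδ z hz1 hz2
    rw [hform _ hw1 hw2]
    have hzk : z + (k:ℂ) ≠ 0 := fun h0 => hz1 (by linear_combination h0)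
    have e : (p:ℂ) * z + ((p * k : ℕ):ℂ) = (p:ℂ) * (z + k) := by push_cast; ring
    rw [e, hzp ((p:ℂ) * (z + (k:ℂ)))]
    field_simp
    rw [mul_pow]
    ring
  have hA := key n hn (min_le_left _ _) h₁ hc₁ (fun w hw1 hw2 => hk₁ w hw1 hw2)
  have hB := key q hq (min_le_right _ _) h₂ hc₂ (fun w hw1 hw2 => hk₂ w hw1 hw2)
  have hBne : c * ((q:ℂ) ^ (i+1))⁻¹ ≠ 0 :=
    mul_ne_zero hcne (inv_ne_zero (pow_ne_zero _ hq'))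
  have hdiv := hA.div hB hBne
  have hlim : (c * ((n:ℂ) ^ (i+1))⁻¹) / (c * ((q:ℂ) ^ (i+1))⁻¹)
      = ((q : ℂ) / n) ^ (i + 1) := by
    rw [mul_div_mul_left _ _ hcne, div_pow, inv_div_inv]
  rw [← hlim]
  apply hdiv.congr'
  filter_upwards [hev] with z hz
  have hzk : z + (k:ℂ) ≠ 0 := fun h0 => hz.1 (by linear_combination h0)
  simp only [Pi.div_apply]
  rw [mul_div_mul_left _ _ (pow_ne_zero _ hzk)]
end

section
/- For positive integers n and q and non-negative integers i and k, the limit as z tends to -k of Γ^(i)(n z) / Γ^(i)(q z) equals (-1)^((n - q) * k) * (q / n)^(i+1) * (q k)! / (n k)!, where Γ^(i) denotes the i-th derivative of the Gamma function. -/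
open Filter Topology Complex Set Finset

private lemma iDW_open {f : ℂ → ℂ} {s : Set ℂ} {x : ℂ} (n : ℕ)
    (hs : IsOpen s) (hx : x ∈ s) : iteratedDerivWithin n f s x = iteratedDeriv n f x := by
  rw [iteratedDerivWithin_eq_iteratedFDerivWithin, iteratedDeriv_eq_iteratedFDeriv,
    iteratedFDerivWithin_of_isOpen n hs hx]

private lemma prod_neg_one_sub (i : ℕ) :
    (∏ j ∈ Finset.range i, (-1 - (j:ℂ))) = (-1)^i * (Nat.factorial i : ℂ) := by
  induction i with
  | zero => simp
  | succ i ih =>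
    rw [Finset.prod_range_succ, ih, Nat.factorial_succ]
    push_cast
    ring

private lemma prod_sub_m (m : ℕ) :
    (∏ j ∈ Finset.range m, ((j:ℂ) - m)) = (-1)^m * (Nat.factorial m : ℂ) := by
  induction m with
  | zero => simp
  | succ m ih =>
    rw [Finset.prod_range_succ']
    have h1 : ∀ j ∈ Finset.range m, (((j+1:ℕ)):ℂ) - ((m+1:ℕ):ℂ) = (j:ℂ) - m := by
      intro j _; push_cast; ring
    rw [Finset.prod_congr rfl h1, ih, Nat.factorial_succ]
    push_cast
    ring

private lemma gammaProd : ∀ (m : ℕ) (z : ℂ), (∀ j : ℕ, j ≤ m → z + j ≠ 0) →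
    Complex.Gamma (z + m + 1) = (∏ j ∈ Finset.range (m+1), (z + j)) * Complex.Gamma z := by
  intro m
  induction m with
  | zero =>
    intro z h
    have h0 : z ≠ 0 := by simpa using h 0 le_rfl
    simp [Complex.Gamma_add_one z h0]
  | succ m ih =>
    intro z h
    have h' : ∀ j : ℕ, j ≤ m → z + j ≠ 0 := fun j hj => h j (hj.trans (Nat.le_succ m))
    have hz : z + ((m:ℂ) + 1) ≠ 0 := by
      have := h (m+1) le_rfl
      push_cast at this
      simpa [add_assoc] using this
    have key := ih z h'
    have e1 : z + ((m+1:ℕ):ℂ) + 1 = (z + m + 1) + 1 := by push_cast; ring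
    rw [e1, Finset.prod_range_succ,
      Complex.Gamma_add_one _ (by rw [show z + (m:ℂ) + 1 = z + ((m:ℂ)+1) by ring]; exact hz),
      key]
    push_cast
    ring

private lemma gamma_analyticAt_one : AnalyticAt ℂ Complex.Gamma (1:ℂ) := by
  have hd : DifferentiableOn ℂ Complex.Gamma (Metric.ball (1:ℂ) 1) := by
    intro z hz
    refine (Complex.differentiableAt_Gamma z ?_).differentiableWithinAt
    intro j hj
    have hd1 : ‖z - 1‖ < 1 := by
      have := Metric.mem_ball.mp hz
      rwa [Complex.dist_eq] at this
    have hre : 0 < z.re := by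
      have h1 : |(z - 1).re| ≤ ‖z - 1‖ := Complex.abs_re_le_norm _
      have h2 : (z - 1).re = z.re - 1 := by simp
      rw [h2] at h1
      have := abs_le.mp h1
      linarith
    rw [hj] at hre
    simp only [Complex.neg_re, Complex.natCast_re] at hre
    have : (0:ℝ) ≤ (j:ℝ) := Nat.cast_nonneg j
    linarith
  exact hd.analyticAt (Metric.ball_mem_nhds _ one_pos)

private lemma gamma_pole (i m : ℕ) :
    Tendsto (fun z : ℂ => (z + m)^(i+1) * iteratedDeriv i Complex.Gamma z)
      (𝓝[≠] (-(m:ℂ)))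
      (𝓝 ((-1)^(m+i) * (Nat.factorial i : ℂ) / (Nat.factorial m : ℂ))) := by
  set c : ℂ := (-1)^m / (Nat.factorial m : ℂ) with hc
  set Q : ℂ → ℂ := fun z => ∏ j ∈ Finset.range m, (z + j) with hQ
  have hQm : Q (-(m:ℂ)) = (-1)^m * (Nat.factorial m : ℂ) := by
    show (∏ j ∈ Finset.range m, (-(m:ℂ) + j)) = _
    trans (∏ j ∈ Finset.range m, ((j:ℂ) - m))
    · exact Finset.prod_congr rfl (fun j _ => by push_cast; ring)
    · exact prod_sub_m m
  have hQm0 : Q (-(m:ℂ)) ≠ 0 := by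
    rw [hQm]
    exact mul_ne_zero (pow_ne_zero _ (by norm_num)) (Nat.cast_ne_zero.mpr (Nat.factorial_ne_zero m))
  have hQa : AnalyticAt ℂ Q (-(m:ℂ)) :=
    Finset.analyticAt_fun_prod _ (fun j _ => (analyticAt_id.add analyticAt_const))
  set f : ℂ → ℂ := fun z => Complex.Gamma (z + m + 1) / Q z with hf
  have hfa : AnalyticAt ℂ f (-(m:ℂ)) := by
    have h0 : AnalyticAt ℂ (fun z : ℂ => z + m + 1) (-(m:ℂ)) :=
      (analyticAt_id.add analyticAt_const).add analyticAt_const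
    have hnum : AnalyticAt ℂ (fun z : ℂ => Complex.Gamma (z + m + 1)) (-(m:ℂ)) :=
      gamma_analyticAt_one.comp_of_eq h0 (by ring)
    exact hnum.div hQa hQm0
  have hfm : f (-(m:ℂ)) = c := by
    rw [hf]
    simp only
    rw [show (-(m:ℂ) + m + 1) = 1 by ring, Complex.Gamma_one, hQm, hc]
    rw [one_div, mul_inv, ← inv_pow, show ((-1:ℂ))⁻¹ = -1 by norm_num, div_eq_mul_inv]
  obtain ⟨p, hp⟩ := hfa
  set g : ℂ → ℂ := dslope f (-(m:ℂ)) with hg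
  have hga : AnalyticAt ℂ g (-(m:ℂ)) := ⟨p.fslope, hp.has_fpower_series_dslope_fslope⟩
  have heq : ∀ᶠ z in 𝓝[≠] (-(m:ℂ)), Complex.Gamma z = c * (z + m)⁻¹ + g z := by
    have hball : Metric.ball (-(m:ℂ)) (1/2) ∈ 𝓝 (-(m:ℂ)) := Metric.ball_mem_nhds _ (by norm_num)
    filter_upwards [mem_nhdsWithin_of_mem_nhds hball, self_mem_nhdsWithin] with z hz hz'
    have hz' : z ≠ -(m:ℂ) := hz'
    have hzm : z + (m:ℂ) ≠ 0 := fun h0 => hz' (eq_neg_of_add_eq_zero_left h0)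
    have hj : ∀ j : ℕ, j ≤ m → z + j ≠ 0 := by
      intro j hjm h0
      rcases eq_or_lt_of_le hjm with rfl | hlt
      · exact hzm h0
      · have hz2 : dist z (-(m:ℂ)) < 1/2 := Metric.mem_ball.mp hz
        rw [eq_neg_of_add_eq_zero_left h0, Complex.dist_eq] at hz2
        have habs : ‖-(j:ℂ) - -(m:ℂ)‖ = ((m - j : ℕ) : ℝ) := by
          rw [show (-(j:ℂ) - -(m:ℂ)) = (((m - j : ℕ)):ℂ) by push_cast [Nat.cast_sub hlt.le]; ring]
          exact Complex.norm_natCast _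
        have h1 : (1:ℝ) ≤ ((m - j:ℕ):ℝ) := by
          exact_mod_cast Nat.one_le_iff_ne_zero.mpr (Nat.sub_ne_zero_of_lt hlt)
        rw [habs] at hz2
        linarith
    have hQz : Q z ≠ 0 :=
      Finset.prod_ne_zero_iff.mpr fun j hjr => hj j (Finset.mem_range.mp hjr).le
    have hgam : Complex.Gamma (z + m + 1) = (Q z * (z + m)) * Complex.Gamma z := by
      have h3 := gammaProd m z hj
      rwa [Finset.prod_range_succ] at h3
    have hfz : f z = c + (z + m) * g z := by
      have h2 := sub_smul_dslope f (-(m:ℂ)) z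
      rw [smul_eq_mul] at h2
      rw [hfm] at h2
      rw [hg]
      linear_combination -h2
    have hGf : Complex.Gamma z = f z * (z + m)⁻¹ := by
      rw [hf]
      simp only
      rw [hgam]
      field_simp
    rw [hGf, hfz]
    field_simp
  -- choose ball where everything holds
  have hev : ∀ᶠ z in 𝓝 (-(m:ℂ)),
      AnalyticAt ℂ g z ∧ (z ≠ -(m:ℂ) → Complex.Gamma z = c * (z + m)⁻¹ + g z) := by
    have h1 := hga.eventually_analyticAt
    have h2 := eventually_nhdsWithin_iff.mp heq
    filter_upwards [h1, h2] with z hz1 hz2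
    exact ⟨hz1, fun h => hz2 h⟩
  obtain ⟨r, hr0, hrp⟩ := Metric.eventually_nhds_iff.mp hev
  set U : Set ℂ := Metric.ball (-(m:ℂ)) r with hU
  have hUo : IsOpen U := Metric.isOpen_ball
  have hUmem : -(m:ℂ) ∈ U := Metric.mem_ball_self hr0
  have hUp : ∀ z ∈ U, AnalyticAt ℂ g z ∧ (z ≠ -(m:ℂ) → Complex.Gamma z = c * (z + m)⁻¹ + g z) :=
    fun z hz => hrp (Metric.mem_ball.mp hz)
  have hgd : DifferentiableOn ℂ g U :=
    fun z hz => ((hUp z hz).1.differentiableAt).differentiableWithinAt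
  have hgC : ContDiffOn ℂ ⊤ g U := hgd.contDiffOn hUo
  set V : Set ℂ := U \ {(-(m:ℂ))} with hV
  have hVo : IsOpen V := hUo.sdiff isClosed_singleton
  have hVne : ∀ z ∈ V, z + (m:ℂ) ≠ 0 := by
    intro z hz h0
    exact hz.2 (by simpa [Set.mem_singleton_iff] using eq_neg_of_add_eq_zero_left h0)
  have hinv0 : ContDiffOn ℂ ⊤ (fun w : ℂ => (w + (m:ℂ))⁻¹) V := by
    refine DifferentiableOn.contDiffOn ?_ hVo
    intro z hz
    have h1 : DifferentiableAt ℂ (fun w : ℂ => w + (m:ℂ)) z :=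
      differentiableAt_id.add_const ((m:ℂ))
    exact (h1.inv (hVne z hz)).differentiableWithinAt
  have hinvC : ContDiffOn ℂ ⊤ (fun w : ℂ => c * (w + (m:ℂ))⁻¹) V :=
    contDiffOn_const.mul hinv0
  set A : ℂ := ∏ j ∈ Finset.range i, (-1 - (j:ℂ)) with hA
  have hDV : ∀ z ∈ V, iteratedDeriv i Complex.Gamma z
      = c * (A * (z + m) ^ (-1 - i : ℤ)) + iteratedDeriv i g z := by
    intro z hz
    have e1 : iteratedDeriv i Complex.Gamma z
        = iteratedDeriv i (fun w : ℂ => c * (w + m)⁻¹ + g w) z := by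
      refine Filter.EventuallyEq.iteratedDeriv_eq i ?_
      filter_upwards [hVo.mem_nhds hz] with w hw
      exact (hUp w hw.1).2 (by simpa [Set.mem_singleton_iff] using hw.2)
    rw [e1, ← iDW_open i hVo hz]
    show iteratedDerivWithin i ((fun w : ℂ => c * (w + (m:ℂ))⁻¹) + g) V z = _
    rw [iteratedDerivWithin_add hz hVo.uniqueDiffOn
      ((hinvC z hz).of_le le_top) (((hgC.mono Set.diff_subset) z hz).of_le le_top)]
    rw [iteratedDerivWithin_const_mul hz hVo.uniqueDiffOn c ((hinv0 z hz).of_le le_top)]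
    rw [iDW_open i hVo hz, iDW_open i hVo hz]
    have h4 := congrFun (iteratedDeriv_comp_add_const i Inv.inv ((m:ℂ))) z
    rw [show (fun w : ℂ => (w + (m:ℂ))⁻¹) = (fun w : ℂ => Inv.inv (w + (m:ℂ))) from rfl, h4,
      iteratedDeriv_eq_iterate, iter_deriv_inv i (z + (m:ℂ)), hA, prod_neg_one_sub]
  -- continuity of iterated derivative of g
  have hcont : ContinuousOn (iteratedDeriv i g) U := by
    have h5 := hgC.continuousOn_iteratedDerivWithin (m := i) le_top hUo.uniqueDiffOn
    exact h5.congr fun z hz => (iDW_open i hUo hz).symm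
  have hT0 : Tendsto (fun z : ℂ => (z+(m:ℂ))^(i+1) * iteratedDeriv i g z)
      (𝓝 (-(m:ℂ))) (𝓝 0) := by
    have h1 : Tendsto (fun z : ℂ => (z+(m:ℂ))^(i+1)) (𝓝 (-(m:ℂ))) (𝓝 0) := by
      have hcc : Continuous fun z : ℂ => (z+(m:ℂ))^(i+1) := by continuity
      have h2 := hcc.tendsto (-(m:ℂ))
      simpa using h2
    have h2 : Tendsto (iteratedDeriv i g) (𝓝 (-(m:ℂ))) (𝓝 (iteratedDeriv i g (-(m:ℂ)))) :=
      hcont.continuousAt (hUo.mem_nhds hUmem)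
    simpa using h1.mul h2
  have hfinal : Tendsto (fun z : ℂ => c * A + (z+(m:ℂ))^(i+1) * iteratedDeriv i g z)
      (𝓝[≠] (-(m:ℂ))) (𝓝 (c * A + 0)) :=
    tendsto_const_nhds.add (hT0.mono_left nhdsWithin_le_nhds)
  have hvalue : c * A + 0 = (-1)^(m+i) * (Nat.factorial i:ℂ)/(Nat.factorial m:ℂ) := by
    rw [hA, prod_neg_one_sub, hc, pow_add]; ring
  rw [← hvalue]
  apply hfinal.congr'
  filter_upwards [mem_nhdsWithin_of_mem_nhds (hUo.mem_nhds hUmem), self_mem_nhdsWithin]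
    with z hzU hzne
  have hzV : z ∈ V := ⟨hzU, hzne⟩
  have hzm : z + (m:ℂ) ≠ 0 := hVne z hzV
  rw [hDV z hzV]
  have hpow : (z+(m:ℂ))^(i+1) * (z+(m:ℂ))^(-1-i : ℤ) = 1 := by
    rw [← zpow_natCast (z+(m:ℂ)) (i+1), ← zpow_add₀ hzm]
    push_cast
    rw [show (i:ℤ) + 1 + (-1 - (i:ℤ)) = 0 by ring, zpow_zero]
  linear_combination (-(c*A)) * hpow

private lemma key_alg (u v w I Fn Fq C : ℂ) (hv : v * v = 1) (hw : w ≠ 0) (hI : I ≠ 0)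
    (hFn : Fn ≠ 0) (hFq : Fq ≠ 0) :
    (u * w * I / Fn) / (v * w * I / Fq) * C = u * v * C * Fq / Fn := by
  have hv0 : v ≠ 0 := fun h => by simp [h] at hv
  field_simp
  linear_combination (-(u * C)) * hv

theorem gamma_deriv_ratio_limit (n q : ℕ) (hn : 0 < n) (hq : 0 < q) (i k : ℕ) :
    Filter.Tendsto
      (fun z : ℂ =>
        iteratedDeriv i Complex.Gamma (n * z) / iteratedDeriv i Complex.Gamma (q * z))
      (nhdsWithin (-(k : ℂ)) {(-(k : ℂ))}ᶜ)
      (nhds ((-1 : ℂ) ^ (((n : ℤ) - q) * k) * ((q : ℂ) / n) ^ (i + 1) *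
        (Nat.factorial (q * k) : ℂ) / (Nat.factorial (n * k) : ℂ))) := by
  have hcomp : ∀ (p : ℕ), 0 < p →
      Tendsto (fun z : ℂ => ((p:ℂ) * (z + k))^(i+1) * iteratedDeriv i Complex.Gamma (p * z))
        (𝓝[≠] (-(k:ℂ)))
        (𝓝 ((-1)^(p*k+i) * (Nat.factorial i : ℂ) / (Nat.factorial (p*k) : ℂ))) := by
    intro p hp
    have hp0 : (p:ℂ) ≠ 0 := Nat.cast_ne_zero.mpr hp.ne'
    have hmap : Tendsto (fun z : ℂ => (p:ℂ) * z) (𝓝[≠] (-(k:ℂ))) (𝓝[≠] (-((p*k:ℕ):ℂ))) := by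
      rw [tendsto_nhdsWithin_iff]
      constructor
      · have h1 : Tendsto (fun z : ℂ => (p:ℂ) * z) (𝓝 (-(k:ℂ))) (𝓝 ((p:ℂ) * (-(k:ℂ)))) :=
          (continuous_const.mul continuous_id).tendsto _
        have h2 : (p:ℂ) * (-(k:ℂ)) = -((p*k:ℕ):ℂ) := by push_cast; ring
        rw [h2] at h1
        exact h1.mono_left nhdsWithin_le_nhds
      · filter_upwards [self_mem_nhdsWithin] with z hz
        simp only [Set.mem_compl_iff, Set.mem_singleton_iff] at hz ⊢
        intro h0
        apply hz
        have : (p:ℂ) * z = (p:ℂ) * (-(k:ℂ)) := by rw [h0]; push_cast; ring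
        exact mul_left_cancel₀ hp0 this
    have h3 := (gamma_pole i (p*k)).comp hmap
    apply h3.congr
    intro z
    simp only [Function.comp_apply]
    congr 2
    push_cast
    ring
  have hLn := hcomp n hn
  have hLq := hcomp q hq
  have hfac : ∀ m : ℕ, (Nat.factorial m : ℂ) ≠ 0 :=
    fun m => Nat.cast_ne_zero.mpr (Nat.factorial_ne_zero m)
  have hLq0 : (-1:ℂ)^(q*k+i) * (Nat.factorial i : ℂ) / (Nat.factorial (q*k) : ℂ) ≠ 0 :=
    div_ne_zero (mul_ne_zero (pow_ne_zero _ (by norm_num)) (hfac i)) (hfac (q*k))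
  have hdiv := (hLn.div hLq hLq0).mul_const (((q:ℂ)/n)^(i+1))
  have hn0 : (n:ℂ) ≠ 0 := Nat.cast_ne_zero.mpr hn.ne'
  have hq0 : (q:ℂ) ≠ 0 := Nat.cast_ne_zero.mpr hq.ne'
  have hval : ((-1:ℂ)^(n*k+i) * (Nat.factorial i : ℂ) / (Nat.factorial (n*k) : ℂ))
      / ((-1:ℂ)^(q*k+i) * (Nat.factorial i : ℂ) / (Nat.factorial (q*k) : ℂ))
      * (((q:ℂ)/n)^(i+1))
      = (-1 : ℂ) ^ (((n : ℤ) - q) * k) * ((q : ℂ) / n) ^ (i + 1) *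
        (Nat.factorial (q * k) : ℂ) / (Nat.factorial (n * k) : ℂ) := by
    have hm1 : ((-1:ℂ))^(((n:ℤ) - q) * k) = (-1:ℂ)^(n*k) * (-1:ℂ)^(q*k) := by
      rw [sub_mul, zpow_sub₀ (by norm_num : (-1:ℂ) ≠ 0),
        show ((n:ℤ)*k) = ((n*k:ℕ):ℤ) by push_cast; ring,
        show ((q:ℤ)*k) = ((q*k:ℕ):ℤ) by push_cast; ring,
        zpow_natCast, zpow_natCast, div_eq_mul_inv, ← inv_pow,
        show ((-1:ℂ))⁻¹ = -1 by norm_num]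
    rw [hm1]
    have hsq : ((-1:ℂ))^(q*k) * ((-1:ℂ))^(q*k) = 1 := by
      rw [← pow_add]
      exact Even.neg_one_pow ⟨q*k, rfl⟩
    rw [pow_add, pow_add]
    exact key_alg _ _ _ _ _ _ _ hsq (pow_ne_zero _ (by norm_num)) (hfac i)
      (hfac (n*k)) (hfac (q*k))
  rw [← hval]
  apply hdiv.congr'
  filter_upwards [self_mem_nhdsWithin] with z hz
  simp only [Set.mem_compl_iff, Set.mem_singleton_iff] at hz
  have hzk : z + (k:ℂ) ≠ 0 := fun h0 => hz (eq_neg_of_add_eq_zero_left h0)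
  set A := iteratedDeriv i Complex.Gamma ((n:ℂ) * z) with hA
  set B := iteratedDeriv i Complex.Gamma ((q:ℂ) * z) with hB
  have ha : ((n:ℂ) * (z + k))^(i+1) ≠ 0 :=
    pow_ne_zero _ (mul_ne_zero (Nat.cast_ne_zero.mpr hn.ne') hzk)
  have hb : ((q:ℂ) * (z + k))^(i+1) ≠ 0 :=
    pow_ne_zero _ (mul_ne_zero (Nat.cast_ne_zero.mpr hq.ne') hzk)
  have hc : ((q:ℂ)/n)^(i+1) = ((q:ℂ) * (z + k))^(i+1) / ((n:ℂ) * (z + k))^(i+1) := by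
    rw [← div_pow, mul_div_mul_right _ _ hzk]
  show ((n:ℂ) * (z + k))^(i+1) * A / (((q:ℂ) * (z + k))^(i+1) * B) * ((q:ℂ)/n)^(i+1) = A / B
  rw [hc]
  by_cases hBz : B = 0
  · simp [hBz]
  · field_simp
end

section
/- For positive integers n and q and a non-negative integer k, the limit as real x tends to -k (through non-integer values) of ψ(n x) / ψ(q x) equals q / n. -/
open Real Filter Set

/-- `Real.Gamma` is smooth on `(0, ∞)`. -/
lemma my_gamma_contDiffOn : ContDiffOn ℝ 2 Real.Gamma (Set.Ioi (0:ℝ)) := by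
  intro x hx
  have hx0 : (0:ℝ) < x := hx
  have hA : AnalyticAt ℂ Complex.Gamma (x : ℂ) := by
    apply DifferentiableOn.analyticAt (s := {s : ℂ | 0 < s.re})
    · intro s hs
      refine (Complex.differentiableAt_Gamma s fun m => ?_).differentiableWithinAt
      intro h
      rw [h] at hs
      simp only [Set.mem_setOf_eq, Complex.neg_re, Complex.natCast_re] at hs
      have : (0:ℝ) ≤ (m:ℝ) := Nat.cast_nonneg m
      linarith
    · exact (isOpen_lt continuous_const Complex.continuous_re).mem_nhds (by simpa using hx0)
  have h2 : ContDiffAt ℂ 2 Complex.Gamma (x : ℂ) := hA.contDiffAt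
  have h3 : ContDiffAt ℝ 2 (fun t : ℝ => (Complex.Gamma (t : ℂ)).re) x := h2.real_of_complex
  have h4 : ContDiffAt ℝ 2 Real.Gamma x := by
    refine h3.congr_of_eventuallyEq ?_
    filter_upwards with t
    rw [Complex.Gamma_ofReal, Complex.ofReal_re]
  exact h4.contDiffWithinAt

/-- digamma (as deriv Γ / Γ) is continuous at 1. -/
lemma my_psi_continuousAt_one :
    ContinuousAt (fun x : ℝ => deriv Real.Gamma x / Real.Gamma x) 1 := by
  have hderiv : ContinuousOn (deriv Real.Gamma) (Set.Ioi (0:ℝ)) :=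
    my_gamma_contDiffOn.continuousOn_deriv_of_isOpen isOpen_Ioi (by norm_num)
  have h1 : ContinuousAt (deriv Real.Gamma) 1 := by
    have := (isOpen_Ioi.continuousOn_iff.mp hderiv) (show (1:ℝ) ∈ Set.Ioi (0:ℝ) by norm_num)
    exact this
  have h2 : ContinuousAt Real.Gamma 1 :=
    (Real.differentiableAt_Gamma (by
      intro m h
      have : (0:ℝ) ≤ m := Nat.cast_nonneg m
      linarith)).continuousAt
  exact h1.div h2 (by rw [Real.Gamma_one]; norm_num)

/-- One-step recurrence for digamma. -/
lemma my_psi_step {z : ℝ} (hz : ∀ m : ℕ, z ≠ -m) :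
    deriv Real.Gamma z / Real.Gamma z
      = deriv Real.Gamma (z + 1) / Real.Gamma (z + 1) - 1 / z := by
  have hz0 : z ≠ 0 := by simpa using hz 0
  have hd : DifferentiableAt ℝ Real.Gamma z := Real.differentiableAt_Gamma hz
  have hΓ : Real.Gamma z ≠ 0 := Real.Gamma_ne_zero hz
  have hev : (fun s : ℝ => Real.Gamma (s + 1)) =ᶠ[nhds z] fun s => s * Real.Gamma s := by
    filter_upwards [isOpen_ne.mem_nhds hz0] with s hs
    exact Real.Gamma_add_one hs
  have hderiv_eq : deriv (fun s : ℝ => Real.Gamma (s + 1)) z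
      = deriv (fun s : ℝ => s * Real.Gamma s) z := hev.deriv_eq
  have h1 : deriv (fun s : ℝ => Real.Gamma (s + 1)) z = deriv Real.Gamma (z + 1) :=
    deriv_comp_add_const _ _ _
  have h2 : deriv (fun s : ℝ => s * Real.Gamma s) z
      = Real.Gamma z + z * deriv Real.Gamma z := by
    rw [deriv_fun_mul differentiableAt_fun_id hd]
    simp
  have key : deriv Real.Gamma (z + 1) = Real.Gamma z + z * deriv Real.Gamma z := by
    rw [← h1, hderiv_eq, h2]
  have hΓ1 : Real.Gamma (z + 1) = z * Real.Gamma z := Real.Gamma_add_one hz0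
  rw [key, hΓ1]
  field_simp
  ring

/-- Iterated recurrence. -/
lemma my_psi_shift (K : ℕ) {z : ℝ} (hz : ∀ m : ℤ, z ≠ m) :
    deriv Real.Gamma z / Real.Gamma z
      = deriv Real.Gamma (z + K) / Real.Gamma (z + K)
        - ∑ j ∈ Finset.range K, 1 / (z + j) := by
  induction K with
  | zero => simp
  | succ K ih =>
      have h1 : ∀ m : ℕ, z + K ≠ -m := by
        intro m h
        exact hz (-(m : ℤ) - K) (by push_cast; linarith)
      rw [ih, my_psi_step h1, Finset.sum_range_succ]
      have : z + ((K : ℝ) + 1) = z + K + 1 := by ring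
      push_cast
      rw [this]
      ring

lemma my_int_ne_of_near {r : ℝ} (hr : |r| < 1/2) (hr0 : r ≠ 0) (j : ℤ) : r ≠ j := by
  intro h
  rcases eq_or_ne j 0 with rfl | hj
  · simp at h; exact hr0 h
  · have : (1:ℝ) ≤ |(j:ℝ)| := by
      have := Int.one_le_abs hj
      calc (1:ℝ) = ((1:ℤ):ℝ) := by norm_num
        _ ≤ ((|j|:ℤ):ℝ) := by exact_mod_cast this
        _ = |(j:ℝ)| := by push_cast; rfl
    rw [h] at hr; linarith

/-- Key limit: `(x+k) * ψ(m x) → -1/m`. -/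
lemma my_key (m : ℕ) (hm : 0 < m) (k : ℕ) :
    Tendsto (fun x : ℝ => (x + k) * (deriv Real.Gamma (m * x) / Real.Gamma (m * x)))
      (nhdsWithin (-(k : ℝ)) {x : ℝ | ∀ j : ℤ, x ≠ j}) (nhds (-1 / m)) := by
  set K : ℕ := m * k + 1 with hK
  set L := nhdsWithin (-(k : ℝ)) {x : ℝ | ∀ j : ℤ, x ≠ j} with hL
  have hm0 : (m:ℝ) ≠ 0 := Nat.cast_ne_zero.mpr hm.ne'
  -- eventual facts
  have hmem : ∀ᶠ x in L, x ∈ {x : ℝ | ∀ j : ℤ, x ≠ j} := eventually_mem_nhdsWithin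
  have hclose : ∀ᶠ x in L, |x + (k:ℝ)| < 1 / (2 * (m:ℝ)) := by
    apply Filter.Eventually.filter_mono nhdsWithin_le_nhds
    have : Tendsto (fun x : ℝ => |x + k|) (nhds (-(k:ℝ))) (nhds |(-(k:ℝ)) + k|) := by
      exact (continuous_abs.comp (continuous_id.add continuous_const)).tendsto _
    simp only [neg_add_cancel, abs_zero] at this
    exact this.eventually_lt_const (by positivity)
  -- on those x, m*x is not an integer
  have hgood : ∀ᶠ x in L, (∀ j : ℤ, (m:ℝ) * x ≠ j) ∧ x + (k:ℝ) ≠ 0 := by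
    filter_upwards [hmem, hclose] with x hx hc
    have hxk : x + (k:ℝ) ≠ 0 := by
      intro h
      exact hx (-(k:ℤ)) (by push_cast; linarith)
    refine ⟨fun j hj => ?_, hxk⟩
    have h1 : (m:ℝ) * (x + k) = (j + (m*k : ℤ) : ℤ) := by push_cast; linear_combination hj
    have h2 : |(m:ℝ) * (x + k)| < 1/2 := by
      rw [abs_mul, abs_of_nonneg (by positivity : (0:ℝ) ≤ (m:ℝ))]
      calc (m:ℝ) * |x + k| < (m:ℝ) * (1/(2*m)) := by
            apply mul_lt_mul_of_pos_left hc (by positivity)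
        _ = 1/2 := by field_simp; try ring
    have h3 : (m:ℝ) * (x + k) ≠ 0 := mul_ne_zero hm0 hxk
    exact my_int_ne_of_near h2 h3 _ h1
  -- target function
  have heq : ∀ᶠ x in L,
      (x + k) * (deriv Real.Gamma (m * x) / Real.Gamma (m * x))
      = (x + (k:ℝ)) * (deriv Real.Gamma ((m:ℝ) * x + K) / Real.Gamma ((m:ℝ) * x + K))
        - ∑ j ∈ Finset.range K, (x + (k:ℝ)) * (1 / ((m:ℝ) * x + j)) := by
    filter_upwards [hgood] with x hx
    rw [my_psi_shift K hx.1, mul_sub, Finset.mul_sum]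
  refine Tendsto.congr' (heq.mono fun x h => h.symm) ?_
  have hlim0 : Tendsto (fun x : ℝ => x + (k:ℝ)) L (nhds 0) := by
    have h : Tendsto (fun x : ℝ => x + (k:ℝ)) (nhds (-(k:ℝ))) (nhds (-(k:ℝ) + k)) :=
      Filter.tendsto_id.add_const _
    have h0 : -(k:ℝ) + k = 0 := by ring
    rw [h0] at h
    exact h.mono_left nhdsWithin_le_nhds
  -- first term → 0
  have hT1 : Tendsto (fun x : ℝ =>
      (x + (k:ℝ)) * (deriv Real.Gamma ((m:ℝ) * x + K) / Real.Gamma ((m:ℝ) * x + K))) L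
      (nhds 0) := by
    have harg : Tendsto (fun x : ℝ => (m:ℝ) * x + K) L (nhds 1) := by
      have : Tendsto (fun x : ℝ => (m:ℝ) * x + K) (nhds (-(k:ℝ)))
          (nhds ((m:ℝ) * (-(k:ℝ)) + K)) :=
        ((continuous_const.mul continuous_id).add continuous_const).tendsto _
      have hval : (m:ℝ) * (-(k:ℝ)) + K = 1 := by rw [hK]; push_cast; ring
      rw [hval] at this
      exact this.mono_left nhdsWithin_le_nhds
    have hψ : Tendsto (fun x : ℝ =>
        deriv Real.Gamma ((m:ℝ) * x + K) / Real.Gamma ((m:ℝ) * x + K)) L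
        (nhds (deriv Real.Gamma 1 / Real.Gamma 1)) :=
      (my_psi_continuousAt_one.tendsto).comp harg
    have := hlim0.mul hψ
    simpa using this
  -- sum term
  have hT2 : Tendsto (fun x : ℝ =>
      ∑ j ∈ Finset.range K, (x + (k:ℝ)) * (1 / ((m:ℝ) * x + j))) L
      (nhds (∑ j ∈ Finset.range K, if j = m * k then 1/(m:ℝ) else 0)) := by
    apply tendsto_finset_sum
    intro j hj
    rcases eq_or_ne j (m * k) with rfl | hjne
    · rw [if_pos rfl]
      apply Tendsto.congr' ?_ tendsto_const_nhds
      filter_upwards [hgood] with x hx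
      have : (m:ℝ) * x + ((m*k : ℕ) : ℝ) = (m:ℝ) * (x + k) := by push_cast; ring
      rw [this, mul_one_div, mul_comm ((m:ℝ)) (x + (k:ℝ)), ← div_div, div_self hx.2]
    · simp only [if_neg hjne]
      have hden : Tendsto (fun x : ℝ => (m:ℝ) * x + j) L (nhds ((j:ℝ) - (m*k:ℕ))) := by
        have : Tendsto (fun x : ℝ => (m:ℝ) * x + j) (nhds (-(k:ℝ)))
            (nhds ((m:ℝ) * (-(k:ℝ)) + j)) :=
          ((continuous_const.mul continuous_id).add continuous_const).tendsto _
        have hval : (m:ℝ) * (-(k:ℝ)) + j = (j:ℝ) - (m*k:ℕ) := by push_cast; ring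
        rw [hval] at this
        exact this.mono_left nhdsWithin_le_nhds
      have hne : ((j:ℝ) - (m*k:ℕ)) ≠ 0 := by
        intro h
        apply hjne
        have : (j:ℝ) = ((m*k:ℕ):ℝ) := by linarith
        exact_mod_cast this
      have := hlim0.div hden hne
      simp only [zero_div] at this
      apply this.congr
      intro x
      simp only [Pi.div_apply]
      rw [div_eq_mul_one_div]
  have hsumval : (∑ j ∈ Finset.range K, if j = m * k then 1/(m:ℝ) else 0) = 1/(m:ℝ) := by
    rw [Finset.sum_ite_eq' (Finset.range K) (m*k) (fun _ => 1/(m:ℝ))]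
    rw [if_pos (Finset.mem_range.mpr (by omega))]
  rw [hsumval] at hT2
  have h9 : (-1 : ℝ)/(m:ℝ) = 0 - 1/(m:ℝ) := by ring
  rw [h9]
  exact hT1.sub hT2

theorem real_digamma_ratio_limit (n q : ℕ) (hn : 0 < n) (hq : 0 < q) (k : ℕ) :
    Filter.Tendsto
      (fun x : ℝ =>
        (deriv Real.Gamma (n * x) / Real.Gamma (n * x)) /
        (deriv Real.Gamma (q * x) / Real.Gamma (q * x)))
      (nhdsWithin (-(k : ℝ)) {x : ℝ | ∀ m : ℤ, x ≠ m})
      (nhds ((q : ℝ) / n)) := by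
  have hn0 : (n:ℝ) ≠ 0 := Nat.cast_ne_zero.mpr hn.ne'
  have hq0 : (q:ℝ) ≠ 0 := Nat.cast_ne_zero.mpr hq.ne'
  have hkn := my_key n hn k
  have hkq := my_key q hq k
  have hdivlim := hkn.div hkq (by
    simp only [ne_eq, div_eq_zero_iff, neg_eq_zero, one_ne_zero, false_or]
    exact hq0)
  have hval : (-1 / (n:ℝ)) / (-1 / (q:ℝ)) = (q:ℝ) / n := by
    field_simp
  rw [hval] at hdivlim
  refine hdivlim.congr' ?_
  filter_upwards [eventually_mem_nhdsWithin] with x hx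
  have hxk : x + (k:ℝ) ≠ 0 := by
    intro h
    exact hx (-(k:ℤ)) (by push_cast; linarith)
  simp only [Pi.div_apply]
  rw [mul_div_mul_left _ _ hxk]
end

section
/- For a non-negative integer m and non-negative integer i, the function z ↦ (z + m)^(i+1) * Γ^(i)(z), extended by the value (-1)^(m+i) * i! / m! at z = -m, is continuous at -m. -/
open Filter Topology Finset

/-- Gamma recurrence iterated. -/
lemma gamma_shift (n : ℕ) (z : ℂ) (hz : ∀ k : ℕ, k < n → z + k ≠ 0) :
    Complex.Gamma (z + n) = Complex.Gamma z * ∏ k ∈ range n, (z + k) := by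
  induction n with
  | zero => simp
  | succ n ih =>
    have h1 : z + n ≠ 0 := hz n (Nat.lt_succ_self n)
    have : Complex.Gamma (z + (n + 1)) = (z + n) * Complex.Gamma (z + n) := by
      rw [show z + ((n : ℂ) + 1) = (z + n) + 1 by ring,
        Complex.Gamma_add_one _ h1]
    rw [Nat.cast_add, Nat.cast_one, this, ih (fun k hk => hz k (hk.trans (Nat.lt_succ_self n))),
      prod_range_succ]
    ring

lemma key (m : ℕ) : ∀ i : ℕ, ∃ h : ℂ → ℂ, AnalyticAt ℂ h (-(m : ℂ)) ∧
    h (-(m : ℂ)) = (-1 : ℂ) ^ (m + i) * (Nat.factorial i : ℂ) / (Nat.factorial m : ℂ) ∧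
    ∀ᶠ z in 𝓝[≠] (-(m : ℂ)), iteratedDeriv i Complex.Gamma z = h z / (z + m) ^ (i + 1) := by
  intro i
  induction i with
  | zero =>
    refine ⟨fun z => Complex.Gamma (z + (m + 1)) / ∏ k ∈ range m, (z + k), ?_, ?_, ?_⟩
    · have hnum : AnalyticAt ℂ (fun z => Complex.Gamma (z + (m + 1))) (-(m : ℂ)) := by
        have hG : AnalyticAt ℂ Complex.Gamma 1 := by
          refine DifferentiableOn.analyticAt (s := {z : ℂ | 0 < z.re}) ?_ ?_
          · intro z hz
            refine (Complex.differentiableAt_Gamma z ?_).differentiableWithinAt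
            intro n hn
            rw [hn] at hz
            simp only [Set.mem_setOf_eq, Complex.neg_re, Complex.natCast_re] at hz
            have : (0 : ℝ) ≤ n := Nat.cast_nonneg n
            linarith
          · exact (isOpen_lt continuous_const Complex.continuous_re).mem_nhds (by norm_num)
        have hG' : AnalyticAt ℂ Complex.Gamma ((-(m : ℂ)) + ((m : ℂ) + 1)) := by
          rw [show (-(m : ℂ)) + ((m : ℂ) + 1) = 1 by ring]; exact hG
        have hadd : AnalyticAt ℂ (fun z : ℂ => z + ((m : ℂ) + 1)) (-(m : ℂ)) :=
          analyticAt_id.add analyticAt_const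
        exact hG'.comp_of_eq hadd rfl
      refine hnum.div ?_ ?_
      · exact Finset.analyticAt_fun_prod _ (fun k _ => analyticAt_id.add analyticAt_const)
      · refine Finset.prod_ne_zero_iff.mpr fun k hk => ?_
        have hk' : k < m := mem_range.mp hk
        intro hc
        have : (k : ℂ) = (m : ℂ) := by linear_combination hc
        exact hk'.ne (Nat.cast_injective this)
    · have hprod : (∏ k ∈ range m, (-(m : ℂ) + k)) = (-1) ^ m * (Nat.factorial m : ℂ) := by
        rw [← Finset.prod_range_reflect]
        have : ∀ j ∈ range m, (-(m : ℂ) + (m - 1 - j : ℕ)) = -((j : ℂ) + 1) := by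
          intro j hj
          have hj' : j < m := mem_range.mp hj
          have : (m - 1 - j : ℕ) = m - (j + 1) := by omega
          rw [this, Nat.cast_sub (by omega)]
          push_cast
          ring
        rw [Finset.prod_congr rfl this]
        have h2 : ∀ j ∈ range m, (-((j : ℂ) + 1)) = (-1) * ((j : ℂ) + 1) := by
          intro j _; ring
        rw [Finset.prod_congr rfl h2, Finset.prod_mul_distrib, Finset.prod_const,
          Finset.card_range]
        have : (∏ j ∈ range m, ((j : ℂ) + 1)) = (Nat.factorial m : ℂ) := by
          rw [← Finset.prod_range_add_one_eq_factorial m]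
          push_cast
          rfl
        rw [this]
      have h1 : -(m : ℂ) + ((m : ℂ) + 1) = 1 := by ring
      show Complex.Gamma (-(m : ℂ) + ((m : ℂ) + 1)) / (∏ k ∈ range m, (-(m : ℂ) + (k : ℂ))) = _
      rw [h1, Complex.Gamma_one, hprod]
      rw [Nat.factorial_zero, Nat.add_zero]
      have hm : ((Nat.factorial m : ℂ)) ≠ 0 := Nat.cast_ne_zero.mpr (Nat.factorial_ne_zero m)
      have hs : ((-1 : ℂ) ^ m) ≠ 0 := by simp
      field_simp
      rw [← pow_mul, mul_comm m 2, pow_mul]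
      norm_num
    · have hb : Metric.ball (-(m : ℂ)) (1/2) ∈ 𝓝 (-(m : ℂ)) :=
        Metric.ball_mem_nhds _ (by norm_num)
      filter_upwards [nhdsWithin_le_nhds hb, self_mem_nhdsWithin] with z hz hz'
      have hz3 : z ≠ -(m : ℂ) := hz'
      have hzm : z + m ≠ 0 := fun hc => hz3 (by linear_combination hc)
      have hne : ∀ k : ℕ, k < m + 1 → z + k ≠ 0 := by
        intro k hk hc
        have hzk : z = -(k : ℂ) := by linear_combination hc
        rw [Metric.mem_ball, hzk, Complex.dist_eq] at hz
        have : (-(k : ℂ) - -(m : ℂ)) = ((m - k : ℤ) : ℂ) := by push_cast; ring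
        rw [this] at hz
        rw [Complex.norm_intCast] at hz
        have hk0 : (m : ℤ) - k ≠ 0 := by
          intro h0
          have : k = m := by omega
          exact hzm (by rw [hzk, this]; ring)
        have : (1 : ℝ) ≤ |((m : ℤ) - k : ℤ)| := by
          exact_mod_cast Int.one_le_abs hk0
        rw [Int.cast_abs] at this
        linarith
      have := gamma_shift (m + 1) z hne
      push_cast at this
      have hmain : Complex.Gamma (z + ((m : ℂ) + 1)) =
          Complex.Gamma z * (∏ k ∈ range m, (z + k)) * (z + m) := by
        rw [this, prod_range_succ]; ring
      have hprodne : (∏ k ∈ range m, (z + k)) ≠ 0 :=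
        Finset.prod_ne_zero_iff.mpr fun k hk => hne k ((mem_range.mp hk).trans (Nat.lt_succ_self m))
      simp only [iteratedDeriv_zero, pow_one]
      rw [hmain]
      field_simp
      ring
  | succ i ih =>
    obtain ⟨h, hA, hval, heq⟩ := ih
    refine ⟨fun z => (z + m) * deriv h z - (i + 1) * h z, ?_, ?_, ?_⟩
    · have hderiv : AnalyticAt ℂ (deriv h) (-(m : ℂ)) := by
        obtain ⟨s, hs_sub, hs_open, hms⟩ := mem_nhds_iff.mp hA.eventually_analyticAt
        exact (AnalyticOnNhd.deriv (fun x hx => hs_sub hx)) _ hms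
      exact ((analyticAt_id.add analyticAt_const).mul hderiv).sub
        (analyticAt_const.mul hA)
    · show (-(m : ℂ) + (m : ℂ)) * deriv h (-(m : ℂ)) - ((i : ℂ) + 1) * h (-(m : ℂ)) = _
      rw [hval]
      have hm : ((Nat.factorial m : ℂ)) ≠ 0 := Nat.cast_ne_zero.mpr (Nat.factorial_ne_zero m)
      rw [Nat.factorial_succ]
      field_simp
      push_cast
      ring
    · have heq' : ∀ᶠ z in 𝓝 (-(m : ℂ)),
          ∀ᶠ w in 𝓝 z, w ≠ -(m : ℂ) →
            iteratedDeriv i Complex.Gamma w = h w / (w + m) ^ (i + 1) :=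
        (eventually_nhdsWithin_iff.mp heq).eventually_nhds
      filter_upwards [nhdsWithin_le_nhds heq', nhdsWithin_le_nhds hA.eventually_analyticAt,
        self_mem_nhdsWithin] with z hz1 hz2 hz3'
      have hz3 : z ≠ -(m : ℂ) := hz3'
      have hzm : z + m ≠ 0 := fun hc => hz3 (by linear_combination hc)
      have hEq : iteratedDeriv i Complex.Gamma =ᶠ[𝓝 z]
          fun w => h w / (w + m) ^ (i + 1) := by
        filter_upwards [hz1, eventually_ne_nhds hz3] with w hw1 hw2
        exact hw1 hw2
      rw [iteratedDeriv_succ, hEq.deriv_eq]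
      have hd : HasDerivAt h (deriv h z) z := hz2.differentiableAt.hasDerivAt
      have hg : HasDerivAt (fun w : ℂ => (w + m) ^ (i + 1))
          (((i : ℂ) + 1) * (z + m) ^ i) z := by
        have := ((hasDerivAt_id z).add_const (m : ℂ)).fun_pow (i + 1)
        simpa using this
      have hpne : (z + m) ^ (i + 1) ≠ 0 := pow_ne_zero _ hzm
      have := (hd.fun_div hg hpne).deriv
      rw [this]
      field_simp
      ring

theorem gamma_deriv_extended_continuous (m i : ℕ) :
    ContinuousAt
      (Function.update
        (fun z : ℂ => (z + m) ^ (i + 1) * iteratedDeriv i Complex.Gamma z)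
        (-(m : ℂ)) ((-1 : ℂ) ^ (m + i) * (Nat.factorial i : ℂ) / (Nat.factorial m : ℂ)))
      (-(m : ℂ)) := by
  obtain ⟨h, hA, hval, heq⟩ := key m i
  rw [continuousAt_update_same]
  have h1 : Filter.Tendsto h (𝓝[≠] (-(m : ℂ)))
      (𝓝 ((-1 : ℂ) ^ (m + i) * (Nat.factorial i : ℂ) / (Nat.factorial m : ℂ))) := by
    rw [← hval]
    exact hA.continuousAt.continuousWithinAt
  refine h1.congr' ?_
  filter_upwards [heq, self_mem_nhdsWithin] with z hz hz'
  have hz3 : z ≠ -(m : ℂ) := hz'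
  have hzm : z + m ≠ 0 := fun hc => hz3 (by linear_combination hc)
  rw [hz]
  field_simp
end
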